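/- Let T be a bounded invertible operator and Θ1 a bounded operator that is (T T†)⁻¹-pseudo-hermitian, i.e., Θ1† = (T T†)⁻¹ Θ1 (T T†). Suppose Θ1,T := T⁻¹ Θ1 T admits an orthonormal basis {en} of eigenvectors: Θ1,T en = εn en. Then all εn are real, and {T en} is a Riesz basis of eigenvectors of Θ1 with real eigenvalues. -/

import Mathlib

open ContinuousLinearMap

theorem riesz_eigenbasis_of_pseudo_hermitian
    {H : Type*} [NormedAddCommGroup H] [InnerProductSpace ℂ H] [CompleteSpace H]
    {ι : Type*} (e : HilbertBasis ι ℂ H)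
    (Θ1 T Tinv S1inv : H →L[ℂ] H)
    (hT1 : T ∘L Tinv = 1) (hT2 : Tinv ∘L T = 1)
    (hS1 : (T ∘L ContinuousLinearMap.adjoint T) ∘L S1inv = 1)
    (hS2 : S1inv ∘L (T ∘L ContinuousLinearMap.adjoint T) = 1)
    (hph : ContinuousLinearMap.adjoint Θ1
      = S1inv ∘L Θ1 ∘L (T ∘L ContinuousLinearMap.adjoint T))
    (ε : ι → ℂ) (hε : ∀ n, (Tinv ∘L Θ1 ∘L T) (e n) = ε n • e n) :
    (∀ n, (ε n).im = 0) ∧ ∀ n, Θ1 (T (e n)) = ε n • T (e n) := by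
  set A : H →L[ℂ] H := Tinv ∘L Θ1 ∘L T with hA
  have hTT : ∀ x, Tinv (T x) = x := fun x => by
    have := ContinuousLinearMap.ext_iff.mp hT2 x
    simpa using this
  have hTT' : ∀ x, T (Tinv x) = x := fun x => by
    have := ContinuousLinearMap.ext_iff.mp hT1 x
    simpa using this
  have h1 : adjoint T ∘L S1inv = Tinv := by
    ext x
    have hx : T (adjoint T (S1inv x)) = x := by
      have := ContinuousLinearMap.ext_iff.mp hS1 x
      simpa using this
    calc (adjoint T ∘L S1inv) x = Tinv (T (adjoint T (S1inv x))) := (hTT _).symm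
      _ = Tinv x := by rw [hx]
  have h2 : (T ∘L adjoint T) ∘L adjoint Tinv = T := by
    have hone : adjoint T ∘L adjoint Tinv = 1 := by
      rw [← adjoint_comp, hT2]
      exact adjoint_id
    calc (T ∘L adjoint T) ∘L adjoint Tinv = T ∘L (adjoint T ∘L adjoint Tinv) := by
          rw [comp_assoc]
      _ = T := by rw [hone]; ext x; simp
  have h1' : star T * S1inv = Tinv := by
    simpa [star_eq_adjoint, mul_def] using h1
  have h2' : T * star T * star Tinv = T := by
    simpa [star_eq_adjoint, mul_def] using h2
  have hst : star Θ1 = S1inv * Θ1 * (T * star T) := by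
    simpa [star_eq_adjoint, mul_def, mul_assoc, comp_assoc] using hph
  have hA' : A = Tinv * Θ1 * T := by
    simp only [hA, mul_def]
    rw [comp_assoc]
  have hsa : IsSelfAdjoint A := by
    rw [IsSelfAdjoint, hA']
    calc star (Tinv * Θ1 * T)
        = star T * star Θ1 * star Tinv := by
          simp [star_mul, mul_assoc]
      _ = star T * (S1inv * Θ1 * (T * star T)) * star Tinv := by rw [hst]
      _ = (star T * S1inv) * Θ1 * (T * star T * star Tinv) := by
          simp only [mul_assoc]
      _ = Tinv * Θ1 * T := by rw [h1', h2']
  have hsym : (A : H →ₗ[ℂ] H).IsSymmetric :=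
    (ContinuousLinearMap.isSelfAdjoint_iff_isSymmetric.mp hsa)
  constructor
  · intro n
    have hnorm : (inner ℂ (e n) (e n) : ℂ) = 1 := by
      have h := e.orthonormal.1 n
      rw [inner_self_eq_norm_sq_to_K, h]
      norm_num
    have hv : (inner ℂ (e n) (A (e n)) : ℂ) = ε n := by
      rw [hε n, inner_smul_right, hnorm, mul_one]
    have hv' : (inner ℂ (A (e n)) (e n) : ℂ) = (starRingEnd ℂ) (ε n) := by
      rw [hε n, inner_smul_left, hnorm, mul_one]
    have := hsym (e n) (e n)
    simp only [ContinuousLinearMap.coe_coe] at this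
    rw [hv', hv] at this
    have : ε n = (starRingEnd ℂ) (ε n) := this.symm
    exact Complex.conj_eq_iff_im.mp this.symm
  · intro n
    have := congrArg T (hε n)
    simpa [hA, comp_apply, hTT', map_smul] using this
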